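/- Let x₁, …, x_M be M i.i.d. random points sampled from the uniform (equi-)distribution in the unit ball 𝔹ₙ ⊂ ℝⁿ, let 0 < r < 1, and set ρ = √(1 − r²). Then P( ‖x_M‖ > r and (xᵢ, x_M/‖x_M‖) < r for all i ≠ M ) ≥ 1 − rⁿ − 0.5 (M − 1) ρⁿ. -/

import Mathlib

open MeasureTheory ProbabilityTheory RealInnerProductSpace


variable {n : ℕ}
local notation "E" n => EuclideanSpace ℝ (Fin n)

-- hyperplane has measure zero
lemma hyperplane_null (u : EuclideanSpace ℝ (Fin n)) (hu : u ≠ 0) :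
    volume {x : EuclideanSpace ℝ (Fin n) | ⟪x, u⟫ = 0} = 0 := by
  have : {x : EuclideanSpace ℝ (Fin n) | ⟪x, u⟫ = 0}
      = ((LinearMap.ker ((innerSL ℝ u : EuclideanSpace ℝ (Fin n) →L[ℝ] ℝ) : EuclideanSpace ℝ (Fin n) →ₗ[ℝ] ℝ) : Submodule ℝ (EuclideanSpace ℝ (Fin n))) : Set (EuclideanSpace ℝ (Fin n))) := by
    ext x
    simp only [SetLike.mem_coe, LinearMap.mem_ker, ContinuousLinearMap.coe_coe, innerSL_apply_apply,
      Set.mem_setOf_eq, real_inner_comm]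
  rw [this]
  apply Measure.addHaar_submodule
  intro h
  have hu2 : ⟪u, u⟫ = (0 : ℝ) := by
    have := h ▸ Submodule.mem_top (R := ℝ) (x := u)
    simpa [LinearMap.mem_ker] using (h.symm ▸ Submodule.mem_top : u ∈ LinearMap.ker ((innerSL ℝ u : EuclideanSpace ℝ (Fin n) →L[ℝ] ℝ) : EuclideanSpace ℝ (Fin n) →ₗ[ℝ] ℝ))
  exact hu (by simpa using inner_self_eq_zero.mp hu2)

-- half-ball
lemma half_ball (u : EuclideanSpace ℝ (Fin n)) (hu : ‖u‖ = 1) (s : ℝ) :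
    volume (Metric.closedBall (0 : EuclideanSpace ℝ (Fin n)) s ∩ {x | 0 ≤ ⟪x, u⟫})
      = volume (Metric.closedBall (0 : EuclideanSpace ℝ (Fin n)) s) / 2 := by
  have hu0 : u ≠ 0 := fun h => by simp [h] at hu
  set f : EuclideanSpace ℝ (Fin n) ≃ₗᵢ[ℝ] EuclideanSpace ℝ (Fin n) :=
    Submodule.reflection (ℝ ∙ u)ᗮ with hf
  have hfu : f u = -u := Submodule.reflection_orthogonalComplement_singleton_eq_neg u
  have hinner : ∀ x, ⟪f x, u⟫ = -⟪x, u⟫ := by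
    intro x
    have h1 : ⟪f x, f u⟫ = ⟪x, u⟫ := f.inner_map_map x u
    rw [hfu, inner_neg_right] at h1
    linarith
  have hcont : Continuous fun x : EuclideanSpace ℝ (Fin n) => ⟪x, u⟫ :=
    continuous_id.inner continuous_const
  set A := Metric.closedBall (0 : EuclideanSpace ℝ (Fin n)) s ∩ {x | 0 ≤ ⟪x, u⟫} with hA
  set B := Metric.closedBall (0 : EuclideanSpace ℝ (Fin n)) s ∩ {x | ⟪x, u⟫ ≤ 0} with hB
  have hmA : MeasurableSet A :=
    measurableSet_closedBall.inter (measurableSet_le measurable_const hcont.measurable)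
  have hpre : f ⁻¹' A = B := by
    ext x
    simp only [Set.mem_preimage, hA, hB, Set.mem_inter_iff, Metric.mem_closedBall,
      dist_zero_right, Set.mem_setOf_eq, f.norm_map, hinner]
    constructor
    · rintro ⟨h1, h2⟩; exact ⟨h1, by linarith⟩
    · rintro ⟨h1, h2⟩; exact ⟨h1, by linarith⟩
  have hBA : volume B = volume A := by
    rw [← hpre]
    exact f.measurePreserving.measure_preimage hmA.nullMeasurableSet
  have hunion : A ∪ B = Metric.closedBall (0 : EuclideanSpace ℝ (Fin n)) s := by
    ext x
    simp only [hA, hB, Set.mem_union, Set.mem_inter_iff, Set.mem_setOf_eq]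
    constructor
    · rintro (⟨h, _⟩ | ⟨h, _⟩) <;> exact h
    · intro h
      rcases le_total (0 : ℝ) ⟪x, u⟫ with h2 | h2
      · exact Or.inl ⟨h, h2⟩
      · exact Or.inr ⟨h, h2⟩
  have hinter : volume (A ∩ B) = 0 := by
    apply measure_mono_null _ (hyperplane_null u hu0)
    rintro x ⟨⟨-, h1⟩, -, h2⟩
    exact le_antisymm h2 h1
  have hsum : volume A + volume B
      = volume (Metric.closedBall (0 : EuclideanSpace ℝ (Fin n)) s) := by
    have hmB : MeasurableSet B :=
      measurableSet_closedBall.inter (measurableSet_le hcont.measurable measurable_const)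
    rw [← measure_union_add_inter A hmB, hunion, hinter, add_zero]
  rw [hBA] at hsum
  rw [ENNReal.eq_div_iff (two_ne_zero) (ENNReal.ofNat_ne_top), two_mul]
  exact hsum

lemma cap_bound (u : EuclideanSpace ℝ (Fin n)) (hu : ‖u‖ = 1) (r ρ : ℝ)
    (hr : 0 < r) (hr1 : r < 1) (hρ : ρ = Real.sqrt (1 - r ^ 2)) :
    volume (Metric.closedBall (0 : EuclideanSpace ℝ (Fin n)) 1 ∩ {x | r ≤ ⟪x, u⟫})
      ≤ ENNReal.ofReal (ρ ^ n)
        * volume (Metric.closedBall (0 : EuclideanSpace ℝ (Fin n)) 1) / 2 := by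
  have h1r : (0 : ℝ) ≤ 1 - r ^ 2 := by nlinarith
  have hρ0 : 0 ≤ ρ := hρ ▸ Real.sqrt_nonneg _
  have hρ2 : ρ ^ 2 = 1 - r ^ 2 := by rw [hρ]; exact Real.sq_sqrt h1r
  set S := Metric.closedBall (0 : EuclideanSpace ℝ (Fin n)) ρ ∩ {x | 0 ≤ ⟪x, u⟫} with hS
  have hsub : Metric.closedBall (0 : EuclideanSpace ℝ (Fin n)) 1 ∩ {x | r ≤ ⟪x, u⟫}
      ⊆ (fun x => x + -(r • u)) ⁻¹' S := by
    rintro x ⟨hx1, hx2⟩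
    rw [mem_closedBall_zero_iff] at hx1
    rw [Set.mem_setOf_eq] at hx2
    rw [Set.mem_preimage, ← sub_eq_add_neg]
    refine ⟨?_, ?_⟩
    · rw [mem_closedBall_zero_iff]
      have hsq : ‖x - r • u‖ ^ 2 ≤ ρ ^ 2 := by
        have := norm_sub_sq_real x (r • u)
        rw [real_inner_smul_right, norm_smul, Real.norm_eq_abs, abs_of_pos hr, hu] at this
        have hx12 : ‖x‖ ^ 2 ≤ 1 := by nlinarith [norm_nonneg x]
        nlinarith
      calc ‖x - r • u‖ = Real.sqrt (‖x - r • u‖ ^ 2) := (Real.sqrt_sq (norm_nonneg _)).symm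
        _ ≤ Real.sqrt (ρ ^ 2) := Real.sqrt_le_sqrt hsq
        _ = ρ := Real.sqrt_sq hρ0
    · rw [Set.mem_setOf_eq, inner_sub_left, real_inner_smul_left,
        real_inner_self_eq_norm_sq, hu]
      nlinarith
  calc volume (Metric.closedBall (0 : EuclideanSpace ℝ (Fin n)) 1 ∩ {x | r ≤ ⟪x, u⟫})
      ≤ volume ((fun x => x + -(r • u)) ⁻¹' S) := measure_mono hsub
    _ = volume S := measure_preimage_add_right _ _ _
    _ = volume (Metric.closedBall (0 : EuclideanSpace ℝ (Fin n)) ρ) / 2 := half_ball u hu ρ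
    _ = ENNReal.ofReal (ρ ^ n)
        * volume (Metric.closedBall (0 : EuclideanSpace ℝ (Fin n)) 1) / 2 := by
      rw [Measure.addHaar_closedBall' _ _ hρ0, finrank_euclideanSpace_fin]

/-- Theorem 2, inequality (7): for `M` i.i.d. points uniform in the unit ball,
with probability at least `1 - rⁿ - 0.5 (M-1) ρⁿ` (where `ρ = √(1-r²)`) the last point
has norm `> r` and separates all the other points:
`⟪xᵢ, x_M / ‖x_M‖⟫ < r` for all `i ≠ M`. -/
theorem stochastic_separation_single_point_ball
    (n M : ℕ) (hn : 0 < n) (hM : 0 < M)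
    (r ρ : ℝ) (hr : 0 < r) (hr1 : r < 1) (hρ : ρ = Real.sqrt (1 - r ^ 2))
    (Ω : Type*) [MeasurableSpace Ω] (P : Measure Ω) [IsProbabilityMeasure P]
    (X : Fin M → Ω → EuclideanSpace ℝ (Fin n))
    (hmeas : ∀ i, Measurable (X i))
    (hindep : iIndepFun X P)
    (hdist : ∀ i, Measure.map (X i) P =
      (volume (Metric.closedBall (0 : EuclideanSpace ℝ (Fin n)) 1))⁻¹ •
        volume.restrict (Metric.closedBall (0 : EuclideanSpace ℝ (Fin n)) 1)) :
    (P {ω | ‖X (⟨M - 1, Nat.sub_lt hM Nat.one_pos⟩ : Fin M) ω‖ > r ∧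
        ∀ i : Fin M, i ≠ ⟨M - 1, Nat.sub_lt hM Nat.one_pos⟩ →
          ⟪X i ω, ‖X (⟨M - 1, Nat.sub_lt hM Nat.one_pos⟩ : Fin M) ω‖⁻¹ •
            X (⟨M - 1, Nat.sub_lt hM Nat.one_pos⟩ : Fin M) ω⟫ < r}).toReal ≥
      1 - r ^ n - 0.5 * ((M : ℝ) - 1) * ρ ^ n := by
  set m : Fin M := ⟨M - 1, Nat.sub_lt hM Nat.one_pos⟩ with hm
  set B := Metric.closedBall (0 : EuclideanSpace ℝ (Fin n)) 1 with hB
  set v := volume B with hv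
  set μ := v⁻¹ • volume.restrict B with hμ
  have hv0 : v ≠ 0 := by
    rw [hv, hB]
    exact (Metric.measure_closedBall_pos volume 0 one_pos).ne'
  have hvt : v ≠ ⊤ := by
    rw [hv, hB]
    exact measure_closedBall_lt_top.ne
  haveI hprob : IsProbabilityMeasure μ := by
    constructor
    rw [hμ, Measure.smul_apply, Measure.restrict_apply MeasurableSet.univ,
      Set.univ_inter, smul_eq_mul, ← hv, ENNReal.inv_mul_cancel hv0 hvt]
  -- measurable inner function
  set g : EuclideanSpace ℝ (Fin n) × EuclideanSpace ℝ (Fin n) → ℝ :=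
    fun p => ⟪p.2, ‖p.1‖⁻¹ • p.1⟫ with hgdef
  have hg : Measurable g :=
    Measurable.inner measurable_snd ((measurable_fst.norm.inv).smul measurable_fst)
  set Egood : Set Ω := {ω | ‖X m ω‖ > r ∧
      ∀ i : Fin M, i ≠ m → ⟪X i ω, ‖X m ω‖⁻¹ • X m ω⟫ < r} with hE
  have hErw : Egood = {ω | r < ‖X m ω‖} ∩
      ⋂ i : Fin M, ⋂ (_ : i ≠ m), {ω | g (X m ω, X i ω) < r} := by
    ext ω
    simp only [hE, Set.mem_setOf_eq, Set.mem_inter_iff, Set.mem_iInter, hgdef, gt_iff_lt]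
  have hmeasE : MeasurableSet Egood := by
    rw [hErw]
    refine (measurableSet_lt measurable_const (hmeas m).norm).inter ?_
    refine MeasurableSet.iInter fun i => MeasurableSet.iInter fun _ => ?_
    exact measurableSet_lt (hg.comp ((hmeas m).prodMk (hmeas i))) measurable_const
  -- the bad events
  set S0 : Set Ω := {ω | ‖X m ω‖ ≤ r} with hS0
  set A : Fin M → Set Ω := fun i => {ω | r ≤ g (X m ω, X i ω)} with hA
  have hcompl : Egoodᶜ ⊆ S0 ∪ ⋃ i ∈ Finset.univ.erase m, A i := by
    intro ω hω
    rw [hErw] at hω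
    simp only [Set.compl_inter, Set.mem_union, Set.mem_compl_iff, Set.mem_setOf_eq,
      Set.mem_iInter, not_lt, not_forall, not_le] at hω
    rcases hω with h | h
    · exact Or.inl h
    · obtain ⟨i, hi, hri⟩ := h
      exact Or.inr (Set.mem_biUnion (Finset.mem_erase.mpr ⟨hi, Finset.mem_univ i⟩) hri)
  -- bound P S0
  have hPS0 : P S0 = ENNReal.ofReal (r ^ n) := by
    have : S0 = X m ⁻¹' Metric.closedBall 0 r := by
      ext ω; simp [hS0, mem_closedBall_zero_iff]
    rw [this, ← Measure.map_apply (hmeas m) measurableSet_closedBall, hdist m,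
      Measure.smul_apply, Measure.restrict_apply measurableSet_closedBall, smul_eq_mul]
    have hsub : Metric.closedBall (0 : EuclideanSpace ℝ (Fin n)) r ∩ B = Metric.closedBall 0 r := by
      rw [hB, Set.inter_eq_left]
      exact Metric.closedBall_subset_closedBall hr1.le
    rw [hsub, Measure.addHaar_closedBall' _ _ hr.le, finrank_euclideanSpace_fin, ← hB, ← hv,
      mul_comm (ENNReal.ofReal (r ^ n)) v, ← mul_assoc, ENNReal.inv_mul_cancel hv0 hvt, one_mul]
  -- slice bound
  have hslice : ∀ y : EuclideanSpace ℝ (Fin n),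
      μ {x | r ≤ ⟪x, ‖y‖⁻¹ • y⟫} ≤ ENNReal.ofReal (ρ ^ n) / 2 := by
    intro y
    by_cases hy : y = 0
    · have : {x : EuclideanSpace ℝ (Fin n) | r ≤ ⟪x, ‖y‖⁻¹ • y⟫} = ∅ := by
        ext x; simp [hy, hr.not_ge]
      rw [this, measure_empty]
      exact zero_le
    · set u := ‖y‖⁻¹ • y with hu
      have hu1 : ‖u‖ = 1 := norm_smul_inv_norm hy
      have hcontu : Continuous fun x : EuclideanSpace ℝ (Fin n) => ⟪x, u⟫ :=
        continuous_id.inner continuous_const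
      have hms : MeasurableSet {x : EuclideanSpace ℝ (Fin n) | r ≤ ⟪x, u⟫} :=
        measurableSet_le measurable_const hcontu.measurable
      rw [hμ, Measure.smul_apply, Measure.restrict_apply hms, smul_eq_mul]
      have hcap := cap_bound u hu1 r ρ hr hr1 hρ
      rw [← hB, ← hv] at hcap
      calc v⁻¹ * volume ({x | r ≤ ⟪x, u⟫} ∩ B)
          ≤ v⁻¹ * (ENNReal.ofReal (ρ ^ n) * v / 2) := by
            refine mul_le_mul_right ?_ _
            rw [Set.inter_comm]; exact hcap
        _ = ENNReal.ofReal (ρ ^ n) / 2 := by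
            rw [← mul_div_assoc, mul_comm (ENNReal.ofReal (ρ ^ n)) v, ← mul_assoc,
              ENNReal.inv_mul_cancel hv0 hvt, one_mul]
  -- bound P (A i) for i ≠ m
  have hPA : ∀ i : Fin M, i ≠ m → P (A i) ≤ ENNReal.ofReal (ρ ^ n) / 2 := by
    intro i hi
    have hind : IndepFun (X m) (X i) P := hindep.indepFun (Ne.symm hi)
    have hmap : Measure.map (fun ω => (X m ω, X i ω)) P = μ.prod μ := by
      rw [(indepFun_iff_map_prod_eq_prod_map_map (hmeas m).aemeasurable
        (hmeas i).aemeasurable).mp hind, hdist m, hdist i]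
    have hmT : MeasurableSet {p : EuclideanSpace ℝ (Fin n) × EuclideanSpace ℝ (Fin n) | r ≤ g p} :=
      measurableSet_le measurable_const hg
    have hArw : A i = (fun ω => (X m ω, X i ω)) ⁻¹' {p | r ≤ g p} := rfl
    rw [hArw, ← Measure.map_apply ((hmeas m).prodMk (hmeas i)) hmT, hmap,
      Measure.prod_apply hmT]
    have hsl : ∀ y : EuclideanSpace ℝ (Fin n),
        μ (Prod.mk y ⁻¹' {p | r ≤ g p}) ≤ ENNReal.ofReal (ρ ^ n) / 2 := by
      intro y
      have : Prod.mk y ⁻¹' {p : EuclideanSpace ℝ (Fin n) × EuclideanSpace ℝ (Fin n) | r ≤ g p}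
          = {x | r ≤ ⟪x, ‖y‖⁻¹ • y⟫} := rfl
      rw [this]; exact hslice y
    calc ∫⁻ y, μ (Prod.mk y ⁻¹' {p | r ≤ g p}) ∂μ
        ≤ ∫⁻ _, ENNReal.ofReal (ρ ^ n) / 2 ∂μ := lintegral_mono hsl
      _ = ENNReal.ofReal (ρ ^ n) / 2 := by
          rw [lintegral_const, measure_univ, mul_one]
  -- combine
  set c : ENNReal := ENNReal.ofReal (ρ ^ n) / 2 with hc
  have hPcompl : P Egoodᶜ ≤ ENNReal.ofReal (r ^ n) + (M - 1 : ℕ) * c := by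
    calc P Egoodᶜ ≤ P (S0 ∪ ⋃ i ∈ Finset.univ.erase m, A i) := measure_mono hcompl
      _ ≤ P S0 + P (⋃ i ∈ Finset.univ.erase m, A i) := measure_union_le _ _
      _ ≤ P S0 + ∑ i ∈ Finset.univ.erase m, P (A i) := by
          exact add_le_add_right (measure_biUnion_finset_le _ _) _
      _ ≤ ENNReal.ofReal (r ^ n) + (M - 1 : ℕ) * c := by
          rw [hPS0]
          refine add_le_add_right ?_ _
          calc ∑ i ∈ Finset.univ.erase m, P (A i)
              ≤ ∑ _i ∈ Finset.univ.erase m, c :=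
                Finset.sum_le_sum fun i hi => hPA i (Finset.mem_erase.mp hi).1
            _ = (M - 1 : ℕ) * c := by
                rw [Finset.sum_const, Finset.card_erase_of_mem (Finset.mem_univ m),
                  Finset.card_univ, Fintype.card_fin, nsmul_eq_mul]
  -- convert to real
  have hρ0 : 0 ≤ ρ := hρ ▸ Real.sqrt_nonneg _
  have hbound_ne_top : ENNReal.ofReal (r ^ n) + (M - 1 : ℕ) * c ≠ ⊤ := by
    apply ENNReal.add_ne_top.mpr
    constructor
    · exact ENNReal.ofReal_ne_top
    · exact ENNReal.mul_ne_top (ENNReal.natCast_ne_top _)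
        (ENNReal.div_lt_top ENNReal.ofReal_ne_top two_ne_zero).ne
  have htoReal : (P Egoodᶜ).toReal ≤ r ^ n + ((M - 1 : ℕ) : ℝ) * (ρ ^ n / 2) := by
    have := ENNReal.toReal_mono hbound_ne_top hPcompl
    rw [ENNReal.toReal_add ENNReal.ofReal_ne_top
      (ENNReal.mul_ne_top (ENNReal.natCast_ne_top _)
        (ENNReal.div_lt_top ENNReal.ofReal_ne_top two_ne_zero).ne),
      ENNReal.toReal_mul, ENNReal.toReal_div, ENNReal.toReal_ofReal (pow_nonneg hr.le n),
      ENNReal.toReal_ofReal (pow_nonneg hρ0 n), ENNReal.toReal_natCast] at this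
    simpa using this
  have hsplit : (P Egood).toReal = 1 - (P Egoodᶜ).toReal := by
    rw [prob_compl_eq_one_sub hmeasE, ENNReal.toReal_sub_of_le prob_le_one ENNReal.one_ne_top,
      ENNReal.toReal_one]
    ring
  rw [hsplit]
  have hcast : ((M - 1 : ℕ) : ℝ) = (M : ℝ) - 1 := by
    rw [Nat.cast_sub hM, Nat.cast_one]
  rw [hcast] at htoReal
  nlinarith [htoReal]
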